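/- For every 1 ≤ a ≤ s ≤ n, γ_a := φ_a · Σ_{1≤x<a} μ(s−x)·x ≤ √(s/(s−a+1)) + √(s/a), where φ_a = 1/(a·σ_a) and σ_a = Σ_{b≤a} μ(b)·√(b/a) + Σ_{a<b≤n} μ(b)·√(a/b). -/

import Mathlib

/-- `σ_a = Σ_{1≤d≤a} μ(d)·√(d/a) + Σ_{a<d≤n} μ(d)·√(a/d)`. -/
noncomputable def sigma (n : ℕ) (μ : ℕ → ℝ) (a : ℕ) : ℝ :=
  ∑ d ∈ Finset.Icc 1 a, μ d * Real.sqrt ((d : ℝ) / a) +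
    ∑ d ∈ Finset.Ioc a n, μ d * Real.sqrt ((a : ℝ) / d)

/-- The potential `Φ(s) = Σ_{1≤a≤s} 1/(a·σ_a)`. -/
noncomputable def Phi (n : ℕ) (μ : ℕ → ℝ) (s : ℕ) : ℝ :=
  ∑ a ∈ Finset.Icc 1 s, 1 / ((a : ℝ) * sigma n μ a)

/-- For `1 ≤ a ≤ s ≤ n`, `γ_a = φ_a · Σ_{1≤x<a} μ(s-x)·x ≤ √(s/(s-a+1)) + √(s/a)`,
where `φ_a = 1/(a·σ_a)`. -/
theorem stmt15 (n : ℕ) (hn : 1 ≤ n) (μ : ℕ → ℝ)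
    (hμ0 : ∀ d, 0 ≤ μ d)
    (hsupp : ∀ d, d ∉ Finset.Icc 1 n → μ d = 0)
    (hsum : ∑ d ∈ Finset.Icc 1 n, μ d = 1)
    (hμ1 : 0 < μ 1)
    (s : ℕ) (hs : s ∈ Finset.Icc 1 n)
    (a : ℕ) (ha : a ∈ Finset.Icc 1 s) :
    (1 / ((a : ℝ) * sigma n μ a)) * ∑ x ∈ Finset.Ico 1 a, μ (s - x) * (x : ℝ) ≤
      Real.sqrt ((s : ℝ) / ((s : ℝ) - a + 1)) + Real.sqrt ((s : ℝ) / a) := by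
  simp only [Finset.mem_Icc] at hs ha
  obtain ⟨hs1, hsn⟩ := hs
  obtain ⟨ha1, has⟩ := ha
  have han : a ≤ n := le_trans has hsn
  have ha0 : (0:ℝ) < a := by exact_mod_cast ha1
  have hs0 : (0:ℝ) < s := by exact_mod_cast hs1
  set R := Real.sqrt ((s : ℝ) / ((s : ℝ) - a + 1)) + Real.sqrt ((s : ℝ) / a) with hR
  have hRnn : 0 ≤ R := by positivity
  -- the weight function
  set w : ℕ → ℝ := fun d => if d ≤ a then Real.sqrt ((d : ℝ) / a) else Real.sqrt ((a : ℝ) / d)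
    with hw
  have hwnn : ∀ d, 0 ≤ w d := by
    intro d; simp only [hw]; split <;> exact Real.sqrt_nonneg _
  -- σ_a as a single sum
  have hsigma_eq : sigma n μ a = ∑ d ∈ Finset.Icc 1 n, μ d * w d := by
    have hu : Finset.Icc 1 n = Finset.Icc 1 a ∪ Finset.Ioc a n := by
      ext d; simp only [Finset.mem_Icc, Finset.mem_union, Finset.mem_Ioc]; omega
    have hdisj : Disjoint (Finset.Icc 1 a) (Finset.Ioc a n) := by
      rw [Finset.disjoint_left]
      intro d hd hd'
      simp only [Finset.mem_Icc] at hd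
      simp only [Finset.mem_Ioc] at hd'
      omega
    rw [hu, Finset.sum_union hdisj]
    unfold sigma
    congr 1
    · exact Finset.sum_congr rfl fun d hd => by
        simp only [Finset.mem_Icc] at hd
        simp [hw, hd.2]
    · exact Finset.sum_congr rfl fun d hd => by
        simp only [Finset.mem_Ioc] at hd
        simp [hw, not_le.mpr hd.1]
  -- σ_a is positive
  have hσpos : 0 < sigma n μ a := by
    rw [hsigma_eq]
    have h1mem : 1 ∈ Finset.Icc 1 n := by simp [hn]
    have h1 : 0 < μ 1 * w 1 := by
      apply mul_pos hμ1
      simp only [hw, ha1, if_pos, Nat.cast_one]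
      exact Real.sqrt_pos.mpr (by positivity)
    calc (0:ℝ) < μ 1 * w 1 := h1
      _ ≤ ∑ d ∈ Finset.Icc 1 n, μ d * w d :=
        Finset.single_le_sum (fun d _ => mul_nonneg (hμ0 d) (hwnn d)) h1mem
  have haσ : 0 < (a:ℝ) * sigma n μ a := mul_pos ha0 hσpos
  -- key pointwise bound
  have hkey : ∀ x ∈ Finset.Ico 1 a, (x:ℝ) ≤ R * ((a:ℝ) * w (s - x)) := by
    intro x hx
    simp only [Finset.mem_Ico] at hx
    obtain ⟨hx1, hxa⟩ := hx
    have hxs : x ≤ s := le_trans (le_of_lt hxa) has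
    have hcast : ((s - x : ℕ) : ℝ) = (s:ℝ) - x := by
      push_cast [Nat.cast_sub hxs]; ring
    have hx0 : (0:ℝ) < x := by exact_mod_cast hx1
    have hxa' : (x:ℝ) < a := by exact_mod_cast hxa
    have hxa1 : (x:ℝ) + 1 ≤ a := by exact_mod_cast hxa
    have has' : (a:ℝ) ≤ s := by exact_mod_cast has
    have hden : (0:ℝ) < (s:ℝ) - a + 1 := by linarith
    by_cases hle : s - x ≤ a
    · -- case s - x ≤ a : use the first term of R
      have hle' : (s:ℝ) - x ≤ a := by rw [← hcast]; exact_mod_cast hle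
      have hb : (x:ℝ) ≤ Real.sqrt ((s : ℝ) / ((s : ℝ) - a + 1)) * ((a:ℝ) * w (s - x)) := by
        simp only [hw, if_pos hle, hcast]
        have e1 : (a:ℝ) * Real.sqrt (((s:ℝ) - x) / a)
            = Real.sqrt ((a:ℝ)^2 * (((s:ℝ) - x) / a)) := by
          rw [Real.sqrt_mul (by positivity), Real.sqrt_sq ha0.le]
        have hsx : (0:ℝ) ≤ (s:ℝ) - x := by linarith
        rw [e1, ← Real.sqrt_mul (div_nonneg hs0.le hden.le)]
        have e2 : (s:ℝ) / ((s:ℝ) - a + 1) * ((a:ℝ)^2 * (((s:ℝ) - x) / a))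
            = (s:ℝ) * a * ((s:ℝ) - x) / ((s:ℝ) - a + 1) := by
          field_simp
        rw [e2, Real.le_sqrt hx0.le
          (div_nonneg (mul_nonneg (mul_nonneg hs0.le ha0.le) hsx) hden.le),
          le_div_iff₀ hden]
        -- x^2 * (s - a + 1) ≤ s * a * (s - x)
        have hx2 : (x:ℝ)^2 ≤ (s:ℝ) * a := by nlinarith
        have h1 : (x:ℝ)^2 * ((s:ℝ) - a + 1) ≤ (s:ℝ) * a * ((s:ℝ) - a + 1) :=
          mul_le_mul_of_nonneg_right hx2 hden.le
        have h2 : (s:ℝ) * a * ((s:ℝ) - a + 1) ≤ (s:ℝ) * a * ((s:ℝ) - x) :=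
          mul_le_mul_of_nonneg_left (by linarith) (mul_nonneg hs0.le ha0.le)
        linarith
      have h2 : 0 ≤ Real.sqrt ((s : ℝ) / a) * ((a:ℝ) * w (s - x)) := by
        apply mul_nonneg (Real.sqrt_nonneg _) (mul_nonneg ha0.le (hwnn _))
      rw [hR, add_mul]; linarith
    · -- case s - x > a : use the second term of R
      push_neg at hle
      have hlt' : (a:ℝ) < (s:ℝ) - x := by rw [← hcast]; exact_mod_cast hle
      have hb : (x:ℝ) ≤ Real.sqrt ((s : ℝ) / a) * ((a:ℝ) * w (s - x)) := by
        simp only [hw, if_neg (not_le.mpr hle), hcast]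
        have hsx0 : (0:ℝ) < (s:ℝ) - x := by linarith
        have e1 : (a:ℝ) * Real.sqrt ((a:ℝ) / ((s:ℝ) - x))
            = Real.sqrt ((a:ℝ)^2 * ((a:ℝ) / ((s:ℝ) - x))) := by
          rw [Real.sqrt_mul (by positivity), Real.sqrt_sq ha0.le]
        rw [e1, ← Real.sqrt_mul (by positivity)]
        have e2 : (s:ℝ) / a * ((a:ℝ)^2 * ((a:ℝ) / ((s:ℝ) - x)))
            = (s:ℝ) * a^2 / ((s:ℝ) - x) := by
          field_simp
        rw [e2, Real.le_sqrt hx0.le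
          (div_nonneg (by positivity) hsx0.le), le_div_iff₀ hsx0]
        have hx2 : (x:ℝ)^2 ≤ (a:ℝ)^2 := by nlinarith
        have h1 : (x:ℝ)^2 * ((s:ℝ) - x) ≤ (a:ℝ)^2 * ((s:ℝ) - x) :=
          mul_le_mul_of_nonneg_right hx2 hsx0.le
        have h2 : (a:ℝ)^2 * ((s:ℝ) - x) ≤ (a:ℝ)^2 * s :=
          mul_le_mul_of_nonneg_left (by linarith) (sq_nonneg _)
        linarith
      have h2 : 0 ≤ Real.sqrt ((s : ℝ) / ((s : ℝ) - a + 1)) * ((a:ℝ) * w (s - x)) := by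
        apply mul_nonneg (Real.sqrt_nonneg _) (mul_nonneg ha0.le (hwnn _))
      rw [hR, add_mul]; linarith
  -- sub-sum bound
  have hsub : ∑ x ∈ Finset.Ico 1 a, μ (s - x) * w (s - x) ≤ sigma n μ a := by
    rw [hsigma_eq]
    have himg : ∑ d ∈ (Finset.Ico 1 a).image (fun x => s - x), μ d * w d
        = ∑ x ∈ Finset.Ico 1 a, μ (s - x) * w (s - x) := by
      apply Finset.sum_image
      intro x hx y hy hxy
      simp only [Finset.coe_Ico, Set.mem_Ico, Finset.mem_coe, Finset.mem_Ico] at hx hy hxy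
      omega
    rw [← himg]
    apply Finset.sum_le_sum_of_subset_of_nonneg
    · intro d hd
      simp only [Finset.mem_image, Finset.mem_Ico] at hd
      obtain ⟨x, ⟨hx1, hxa⟩, rfl⟩ := hd
      simp only [Finset.mem_Icc]
      omega
    · intro d _ _
      exact mul_nonneg (hμ0 d) (hwnn d)
  -- put it together
  rw [one_div, inv_mul_le_iff₀ haσ]
  calc ∑ x ∈ Finset.Ico 1 a, μ (s - x) * (x:ℝ)
      ≤ ∑ x ∈ Finset.Ico 1 a, μ (s - x) * (R * ((a:ℝ) * w (s - x))) := by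
        apply Finset.sum_le_sum
        intro x hx
        exact mul_le_mul_of_nonneg_left (hkey x hx) (hμ0 _)
    _ = ((a:ℝ) * R) * ∑ x ∈ Finset.Ico 1 a, μ (s - x) * w (s - x) := by
        rw [Finset.mul_sum]; apply Finset.sum_congr rfl; intro x _; ring
    _ ≤ ((a:ℝ) * R) * sigma n μ a := by
        apply mul_le_mul_of_nonneg_left hsub (by positivity)
    _ = (a:ℝ) * sigma n μ a * R := by ring
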